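/- Let r ∈ (0,1) and let ν = (1-r)δ₀ + rδ₁ be the Bernoulli(r) distribution. The Jørgensen set of ν equals ℕ* = {1,2,3,...}: for x > 0 non-integer there is no probability measure on ℝ whose Laplace transform equals (1-r+r·e^θ)^x for all θ ∈ ℝ. -/

import Mathlib

open MeasureTheory Real Finset

lemma aux_base_pos {r : ℝ} (hr0 : 0 < r) (hr1 : r < 1) {y : ℝ} (hy : 0 ≤ y) :
    0 < 1 - r + r * y := by nlinarith

lemma aux_key (r x : ℝ) (hr0 : 0 < r) (hr1 : r < 1) {w : ℝ} (hw : 0 < w) :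
    ∀ i : ℕ, ∀ y ∈ Set.Icc (0:ℝ) w,
      iteratedDerivWithin i (fun z => (1 - r + r * z) ^ x) (Set.Icc (0:ℝ) w) y =
        (∏ j ∈ Finset.range i, (x - (j:ℝ))) * r ^ i * (1 - r + r * y) ^ (x - (i:ℝ)) := by
  have hs : UniqueDiffOn ℝ (Set.Icc (0:ℝ) w) := uniqueDiffOn_Icc hw
  intro i
  induction i with
  | zero => intro y hy; simp
  | succ i ih =>
    intro y hy
    have hb : 0 < 1 - r + r * y := aux_base_pos hr0 hr1 hy.1
    rw [iteratedDerivWithin_succ]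
    rw [derivWithin_congr (fun z hz => ih z hz) (ih y hy)]
    have h1 : HasDerivAt (fun z : ℝ => 1 - r + r * z) r y := by
      simpa using ((hasDerivAt_id y).const_mul r).const_add (1 - r)
    have h2 := (Real.hasDerivAt_rpow_const (x := 1 - r + r * y) (p := x - (i:ℝ))
      (Or.inl hb.ne')).comp y h1
    have h2' : HasDerivAt (fun z : ℝ => (1 - r + r * z) ^ (x - (i:ℝ)))
        ((x - (i:ℝ)) * (1 - r + r * y) ^ (x - (i:ℝ) - 1) * r) y := h2
    have h3 := h2'.const_mul ((∏ j ∈ Finset.range i, (x - (j:ℝ))) * r ^ i)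
    rw [h3.hasDerivWithinAt.derivWithin (hs y hy)]
    have he : x - (i:ℝ) - 1 = x - ((i:ℕ) + 1 : ℝ) := by ring
    rw [Finset.prod_range_succ]
    rw [he]
    push_cast
    ring

lemma aux_taylor (r x : ℝ) (hr0 : 0 < r) (hr1 : r < 1) (n : ℕ)
    (hxn : x - ((n:ℝ) + 1) ≤ 0) {w : ℝ} (hw : 0 < w) :
    ∃ v : ℝ,
      (1 - r + r * w) ^ (x - ((n:ℝ) + 1)) ≤ v ∧
      v ≤ (1 - r) ^ (x - ((n:ℝ) + 1)) ∧
      (1 - r + r * w) ^ x =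
        (∑ i ∈ Finset.range (n + 1),
          ((i.factorial : ℝ))⁻¹ * w ^ i *
            ((∏ j ∈ Finset.range i, (x - (j:ℝ))) * r ^ i * (1 - r) ^ (x - (i:ℝ)))) +
        (∏ j ∈ Finset.range (n + 1), (x - (j:ℝ))) * r ^ (n + 1) * v * w ^ (n + 1) /
          ((n + 1).factorial : ℝ) := by
  have hs : UniqueDiffOn ℝ (Set.Icc (0:ℝ) w) := uniqueDiffOn_Icc hw
  have key := aux_key r x hr0 hr1 hw
  have hcont : ContDiffOn ℝ n (fun z => (1 - r + r * z) ^ x) (Set.Icc (0:ℝ) w) := by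
    intro y hy
    have hb : 0 < 1 - r + r * y := aux_base_pos hr0 hr1 hy.1
    have hinner : ContDiffAt ℝ n (fun z : ℝ => 1 - r + r * z) y :=
      (contDiff_const.add (contDiff_const.mul contDiff_id)).contDiffAt
    exact ((Real.contDiffAt_rpow_const_of_ne (p := x) hb.ne').comp y hinner).contDiffWithinAt
  have hdiff : DifferentiableOn ℝ
      (iteratedDerivWithin n (fun z => (1 - r + r * z) ^ x) (Set.Icc (0:ℝ) w))
      (Set.Ioo (0:ℝ) w) := by
    have hd : DifferentiableOn ℝ
        (fun y => (∏ j ∈ Finset.range n, (x - (j:ℝ))) * r ^ n * (1 - r + r * y) ^ (x - (n:ℝ)))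
        (Set.Ioo (0:ℝ) w) := by
      intro y hy
      have hb : 0 < 1 - r + r * y := aux_base_pos hr0 hr1 hy.1.le
      have h1 : HasDerivAt (fun z : ℝ => 1 - r + r * z) r y := by
        simpa using ((hasDerivAt_id y).const_mul r).const_add (1 - r)
      have h2 := (Real.hasDerivAt_rpow_const (x := 1 - r + r * y) (p := x - (n:ℝ))
        (Or.inl hb.ne')).comp y h1
      have h2' : HasDerivAt (fun z : ℝ => (1 - r + r * z) ^ (x - (n:ℝ)))
          ((x - (n:ℝ)) * (1 - r + r * y) ^ (x - (n:ℝ) - 1) * r) y := h2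
      exact ((h2'.const_mul _).differentiableAt).differentiableWithinAt
    exact hd.congr (fun y hy => key n y (Set.Ioo_subset_Icc_self hy))
  obtain ⟨x', hx', htay⟩ := taylor_mean_remainder_lagrange hw.ne
    (by rw [Set.uIcc_of_le hw.le]; exact hcont)
    (by rw [Set.uIcc_of_le hw.le, Set.uIoo_of_le hw.le]; exact hdiff)
  rw [Set.uIoo_of_le hw.le] at hx'
  rw [Set.uIcc_of_le hw.le] at htay
  have hx'Icc : x' ∈ Set.Icc (0:ℝ) w := Set.Ioo_subset_Icc_self hx'
  have hb' : 0 < 1 - r + r * x' := aux_base_pos hr0 hr1 hx'Icc.1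
  refine ⟨(1 - r + r * x') ^ (x - ((n:ℝ) + 1)), ?_, ?_, ?_⟩
  · exact Real.rpow_le_rpow_of_nonpos hb' (by nlinarith [hx'.2]) hxn
  · exact Real.rpow_le_rpow_of_nonpos (by linarith) (by nlinarith [hx'.1]) hxn
  · have hT : taylorWithinEval (fun z => (1 - r + r * z) ^ x) n (Set.Icc (0:ℝ) w) 0 w =
        ∑ i ∈ Finset.range (n + 1),
          ((i.factorial : ℝ))⁻¹ * w ^ i *
            ((∏ j ∈ Finset.range i, (x - (j:ℝ))) * r ^ i * (1 - r) ^ (x - (i:ℝ))) := by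
      rw [taylor_within_apply]
      refine Finset.sum_congr rfl (fun i hi => ?_)
      have h0 : (0:ℝ) ∈ Set.Icc (0:ℝ) w := Set.left_mem_Icc.mpr hw.le
      rw [key i 0 h0]
      rw [mul_zero, add_zero, sub_zero, smul_eq_mul]
    have hD : iteratedDerivWithin (n + 1) (fun z => (1 - r + r * z) ^ x)
        (Set.Icc (0:ℝ) w) x' =
        (∏ j ∈ Finset.range (n + 1), (x - (j:ℝ))) * r ^ (n + 1) *
          (1 - r + r * x') ^ (x - ((n:ℝ) + 1)) := by
      rw [key (n + 1) x' hx'Icc]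
      push_cast
      ring_nf
    rw [hT, hD] at htay
    rw [sub_zero] at htay
    linarith [htay]
set_option maxHeartbeats 1000000 in
open MeasureTheory Real Finset in
theorem bernoulli_jorgensen_set
    (r x : ℝ) (hr : r ∈ Set.Ioo (0:ℝ) 1) (hx : 0 < x) (hxnotint : ∀ n : ℤ, x ≠ n) :
    ¬ ∃ μ : Measure ℝ, IsProbabilityMeasure μ ∧
      ∀ θ : ℝ, ∫⁻ t, ENNReal.ofReal (Real.exp (θ * t)) ∂μ =
        ENNReal.ofReal ((1 - r + r * Real.exp θ) ^ x) := by
  rintro ⟨μ, hprob, hL⟩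
  obtain ⟨hr0, hr1⟩ := hr
  have hbase : ∀ s : ℝ, 0 < 1 - r + r * Real.exp s :=
    fun s => aux_base_pos hr0 hr1 (Real.exp_pos s).le
  -- integrability of exponential moments
  have hInt : ∀ s : ℝ, Integrable (fun t => Real.exp (s * t)) μ := by
    intro s
    have hmeas : AEStronglyMeasurable (fun t : ℝ => Real.exp (s * t)) μ :=
      (Real.continuous_exp.comp (continuous_const.mul continuous_id)).aestronglyMeasurable
    refine ⟨hmeas, ?_⟩
    rw [hasFiniteIntegral_iff_ofReal (Filter.Eventually.of_forall fun t => (Real.exp_pos _).le),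
      hL s]
    exact ENNReal.ofReal_lt_top
  have hIntEq : ∀ s : ℝ, ∫ t, Real.exp (s * t) ∂μ = (1 - r + r * Real.exp s) ^ x := by
    intro s
    rw [integral_eq_lintegral_of_nonneg_ae
      (Filter.Eventually.of_forall fun t => (Real.exp_pos _).le) (hInt s).1, hL s,
      ENNReal.toReal_ofReal (Real.rpow_nonneg (hbase s).le x)]
  -- the floor
  set m : ℕ := ⌊x⌋₊ with hm
  have hm1 : (m:ℝ) < x := by
    rcases lt_or_eq_of_le (Nat.floor_le hx.le) with h | h
    · exact h
    · exact absurd (by exact_mod_cast h.symm) (hxnotint m)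
  have hm2 : x < (m:ℝ) + 1 := Nat.lt_floor_add_one x
  -- the polynomial
  set Q : Polynomial ℝ :=
    ∏ j ∈ Finset.range (m + 2), (Polynomial.X - Polynomial.C (Real.exp (-(j:ℝ)))) with hQ
  set P : Polynomial ℝ := Q ^ 2 with hP
  set N : ℕ := P.natDegree + 1 with hN
  have hQeval : ∀ u : ℝ, Q.eval u = ∏ j ∈ Finset.range (m + 2), (u - Real.exp (-(j:ℝ))) := by
    intro u; rw [hQ]; simp [Polynomial.eval_prod]
  have hPeval : ∀ u : ℝ, P.eval u = (Q.eval u) ^ 2 := fun u => by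
    rw [hP, Polynomial.eval_pow]
  have hProot : ∀ i : ℕ, i < m + 2 → P.eval (Real.exp (-(i:ℝ))) = 0 := by
    intro i hi
    rw [hPeval, hQeval, Finset.prod_eq_zero (Finset.mem_range.mpr hi) (sub_self (Real.exp (-(i:ℝ))))]
    norm_num
  have hPpos : 0 < P.eval (Real.exp (-((m + 2 : ℕ):ℝ))) := by
    rw [hPeval, hQeval]
    apply pow_two_pos_of_ne_zero
    apply Finset.prod_ne_zero_iff.mpr
    intro j hj
    have hj2 : (j:ℝ) < ((m + 2 : ℕ):ℝ) := by exact_mod_cast Finset.mem_range.mp hj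
    have : -((m + 2 : ℕ):ℝ) ≠ -(j:ℝ) := by intro h; rw [neg_inj] at h; linarith
    exact sub_ne_zero_of_ne (fun h => this (Real.exp_injective h))
  -- positivity of F
  have hFpos : ∀ θ : ℝ,
      0 ≤ ∑ k ∈ Finset.range N, P.coeff k * (1 - r + r * Real.exp (θ - (k:ℝ))) ^ x := by
    intro θ
    have hrw : ∑ k ∈ Finset.range N, P.coeff k * (1 - r + r * Real.exp (θ - (k:ℝ))) ^ x
        = ∫ t, ∑ k ∈ Finset.range N, P.coeff k * Real.exp ((θ - (k:ℝ)) * t) ∂μ := by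
      rw [integral_finset_sum _ (fun k _ => (hInt _).const_mul _)]
      exact Finset.sum_congr rfl fun k _ => by rw [integral_const_mul, hIntEq]
    rw [hrw]
    apply integral_nonneg
    intro t
    have hpt : ∑ k ∈ Finset.range N, P.coeff k * Real.exp ((θ - (k:ℝ)) * t)
        = Real.exp (θ * t) * P.eval (Real.exp (-t)) := by
      rw [Polynomial.eval_eq_sum_range, Finset.mul_sum]
      refine Finset.sum_congr rfl fun k _ => ?_
      rw [← Real.exp_nat_mul]
      have harg : (θ - (k:ℝ)) * t = θ * t + (k:ℝ) * -t := by ring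
      rw [harg, Real.exp_add]
      ring
    simp only [Pi.zero_apply, hpt, hPeval]
    positivity
  -- ===== negativity part =====
  clear_value m Q P N
  clear hL hInt hIntEq hQeval hPeval hQ hP
  have hfac : (0:ℝ) < ((m + 1 + 1).factorial : ℝ) := by exact_mod_cast (m + 1 + 1).factorial_pos
  set Dp : ℝ := ∏ j ∈ Finset.range (m + 1 + 1), (x - (j:ℝ)) with hDpdef
  have hDneg : Dp < 0 := by
    rw [hDpdef, Finset.prod_range_succ]
    have hpos : 0 < ∏ j ∈ Finset.range (m + 1), (x - (j:ℝ)) := by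
      apply Finset.prod_pos
      intro j hj
      have : (j:ℝ) ≤ (m:ℝ) := by exact_mod_cast Nat.lt_succ_iff.mp (Finset.mem_range.mp hj)
      linarith
    have hneg : x - ((m + 1 : ℕ):ℝ) < 0 := by push_cast; linarith
    nlinarith
  have hzneg : x - (((m + 1 : ℕ):ℝ) + 1) ≤ 0 := by push_cast; linarith
  set v0 : ℝ := (1 - r) ^ (x - (((m + 1 : ℕ):ℝ) + 1)) with hv0def
  have hv0pos : 0 < v0 := Real.rpow_pos_of_pos (by linarith) _
  have hPpos2 : 0 < Polynomial.eval (Real.exp (-((m + 1 + 1 : ℕ):ℝ))) P := by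
    have : ((m + 1 + 1 : ℕ):ℝ) = ((m + 2 : ℕ):ℝ) := by push_cast; ring
    rw [this]; exact hPpos
  set Pm2 : ℝ := Polynomial.eval (Real.exp (-((m + 1 + 1 : ℕ):ℝ))) P with hPm2def
  set B : ℝ := ∑ k ∈ Finset.range N, |P.coeff k| with hBdef
  have hB0 : 0 ≤ B := Finset.sum_nonneg fun k _ => abs_nonneg _
  set c : ℝ := v0 * Pm2 / (B + 1) with hcdef
  have hc0 : 0 < c := div_pos (mul_pos hv0pos hPpos2) (by linarith)
  -- continuity at 0 to pick ε
  have hcont0 : ContinuousAt (fun e : ℝ => (1 - r + r * e) ^ (x - (((m + 1 : ℕ):ℝ) + 1))) 0 := by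
    have h1 : ContinuousAt (fun e : ℝ => 1 - r + r * e) 0 :=
      (continuous_const.add (continuous_const.mul continuous_id)).continuousAt
    exact h1.rpow_const (Or.inl (by norm_num; linarith))
  rw [Metric.continuousAt_iff] at hcont0
  obtain ⟨δ, hδ0, hδ⟩ := hcont0 c hc0
  set ε : ℝ := δ / 2 with hεdef
  have hε0 : 0 < ε := by positivity
  set θ : ℝ := Real.log ε with hθdef
  have hexpθ : Real.exp θ = ε := Real.exp_log hε0
  have hδε := hδ (x := ε) (by rw [Real.dist_eq, sub_zero, abs_of_pos hε0]; rw [hεdef]; linarith)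
  set lo : ℝ := (1 - r + r * ε) ^ (x - (((m + 1 : ℕ):ℝ) + 1)) with hlodef
  have hlov0 : v0 - lo < c := by
    have h00 : (1 - r + r * (0:ℝ)) = 1 - r := by ring
    rw [Real.dist_eq, h00] at hδε
    have := abs_lt.mp hδε
    rw [hv0def, hlodef]
    linarith [this.1]
  have hlole : lo ≤ v0 := by
    rw [hv0def, hlodef]
    exact Real.rpow_le_rpow_of_nonpos (by linarith) (by nlinarith) hzneg
  -- Taylor expansion at each k
  have htay := fun k : ℕ => aux_taylor r x hr0 hr1 (m + 1) hzneg (Real.exp_pos (θ - (k:ℝ)))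
  choose v hv1 hv2 hv3 using htay
  have hwk_pos : ∀ k : ℕ, 0 < Real.exp (θ - (k:ℝ)) := fun k => Real.exp_pos _
  have hwk_le : ∀ k : ℕ, Real.exp (θ - (k:ℝ)) ≤ ε := by
    intro k
    rw [← hexpθ]
    exact Real.exp_le_exp.mpr (by linarith [Nat.cast_nonneg (α := ℝ) k])
  have hlo_le_v : ∀ k : ℕ, lo ≤ v k := by
    intro k
    refine le_trans ?_ (hv1 k)
    rw [hlodef]
    exact Real.rpow_le_rpow_of_nonpos (aux_base_pos hr0 hr1 (hwk_pos k).le)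
      (by nlinarith [hwk_le k]) hzneg
  have hv_le_v0 : ∀ k : ℕ, v k ≤ v0 := by
    intro k; rw [hv0def]; exact hv2 k
  -- the key sum identity
  have hwk : ∀ i : ℕ, ∑ k ∈ Finset.range N, P.coeff k * (Real.exp (θ - (k:ℝ)))^i
      = (Real.exp θ)^i * Polynomial.eval (Real.exp (-(i:ℝ))) P := by
    intro i
    rw [Polynomial.eval_eq_sum_range, ← hN, Finset.mul_sum]
    refine Finset.sum_congr rfl fun k _ => ?_
    rw [← Real.exp_nat_mul, ← Real.exp_nat_mul, ← Real.exp_nat_mul]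
    have harg : (i:ℝ) * (θ - (k:ℝ)) = (i:ℝ) * θ + (k:ℝ) * -(i:ℝ) := by ring
    rw [harg, Real.exp_add]; ring
  set S : ℝ := ∑ k ∈ Finset.range N, P.coeff k * v k * (Real.exp (θ - (k:ℝ)))^(m+1+1) with hSdef
  have hFeq : ∑ k ∈ Finset.range N, P.coeff k * (1 - r + r * Real.exp (θ - (k:ℝ))) ^ x
      = Dp * r^(m+1+1) / ((m+1+1).factorial : ℝ) * S := by
    have h1 : ∀ k ∈ Finset.range N,
        P.coeff k * (1 - r + r * Real.exp (θ - (k:ℝ))) ^ x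
        = (∑ i ∈ Finset.range (m+1+1), P.coeff k *
            ((i.factorial : ℝ)⁻¹ * (Real.exp (θ - (k:ℝ)))^i *
              ((∏ j ∈ Finset.range i, (x - (j:ℝ))) * r^i * (1-r)^(x - (i:ℝ)))))
          + P.coeff k * (Dp * r^(m+1+1) * v k * (Real.exp (θ - (k:ℝ)))^(m+1+1) /
              ((m+1+1).factorial : ℝ)) := by
      intro k _
      rw [hv3 k, mul_add, Finset.mul_sum, hDpdef]
    rw [Finset.sum_congr rfl h1, Finset.sum_add_distrib]
    have hzero : (∑ k ∈ Finset.range N, ∑ i ∈ Finset.range (m+1+1), P.coeff k *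
        ((i.factorial : ℝ)⁻¹ * (Real.exp (θ - (k:ℝ)))^i *
          ((∏ j ∈ Finset.range i, (x - (j:ℝ))) * r^i * (1-r)^(x - (i:ℝ))))) = 0 := by
      rw [Finset.sum_comm]
      apply Finset.sum_eq_zero
      intro i hi
      have h0 : Polynomial.eval (Real.exp (-(i:ℝ))) P = 0 :=
        hProot i (by have := Finset.mem_range.mp hi; omega)
      have h2 : ∑ k ∈ Finset.range N, P.coeff k *
          ((i.factorial : ℝ)⁻¹ * (Real.exp (θ - (k:ℝ)))^i *
            ((∏ j ∈ Finset.range i, (x - (j:ℝ))) * r^i * (1-r)^(x - (i:ℝ))))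
          = ((i.factorial : ℝ)⁻¹ * ((∏ j ∈ Finset.range i, (x - (j:ℝ))) * r^i * (1-r)^(x - (i:ℝ)))) *
            ∑ k ∈ Finset.range N, P.coeff k * (Real.exp (θ - (k:ℝ)))^i := by
        rw [Finset.mul_sum]
        exact Finset.sum_congr rfl fun k _ => by ring
      rw [h2, hwk i, h0]; ring
    rw [hzero, zero_add]
    rw [Finset.mul_sum]
    exact Finset.sum_congr rfl fun k _ => by ring
  -- S is positive
  have hSsplit : S = v0 * ((Real.exp θ)^(m+1+1) * Pm2)
      + ∑ k ∈ Finset.range N, P.coeff k * (v k - v0) * (Real.exp (θ - (k:ℝ)))^(m+1+1) := by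
    have h1 : S = (∑ k ∈ Finset.range N, v0 * (P.coeff k * (Real.exp (θ - (k:ℝ)))^(m+1+1)))
        + ∑ k ∈ Finset.range N, P.coeff k * (v k - v0) * (Real.exp (θ - (k:ℝ)))^(m+1+1) := by
      rw [hSdef, ← Finset.sum_add_distrib]
      exact Finset.sum_congr rfl fun k _ => by ring
    rw [h1, ← Finset.mul_sum, hwk (m+1+1), hPm2def]
  have habs : ∀ k ∈ Finset.range N,
      |P.coeff k * (v k - v0) * (Real.exp (θ - (k:ℝ)))^(m+1+1)|
        ≤ |P.coeff k| * ((v0 - lo) * ε^(m+1+1)) := by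
    intro k _
    rw [abs_mul, abs_mul]
    have h1 : |v k - v0| ≤ v0 - lo := by
      rw [abs_sub_comm, abs_of_nonneg (by linarith [hv_le_v0 k])]
      linarith [hlo_le_v k]
    have h2 : |(Real.exp (θ - (k:ℝ)))^(m+1+1)| ≤ ε^(m+1+1) := by
      rw [abs_of_pos (pow_pos (hwk_pos k) _)]
      exact pow_le_pow_left₀ (hwk_pos k).le (hwk_le k) _
    have h3 : (0:ℝ) ≤ v0 - lo := by linarith
    calc |P.coeff k| * |v k - v0| * |(Real.exp (θ - (k:ℝ)))^(m+1+1)|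
        = |P.coeff k| * (|v k - v0| * |(Real.exp (θ - (k:ℝ)))^(m+1+1)|) := by ring
      _ ≤ |P.coeff k| * ((v0 - lo) * ε^(m+1+1)) :=
          mul_le_mul_of_nonneg_left (mul_le_mul h1 h2 (abs_nonneg _) h3) (abs_nonneg _)
  have hEB : |∑ k ∈ Finset.range N, P.coeff k * (v k - v0) * (Real.exp (θ - (k:ℝ)))^(m+1+1)|
      ≤ B * ((v0 - lo) * ε^(m+1+1)) := by
    refine le_trans (Finset.abs_sum_le_sum_abs _ _) ?_
    rw [hBdef, Finset.sum_mul]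
    exact Finset.sum_le_sum habs
  have hSpos : 0 < S := by
    have h1 : v0 * Pm2 = c * (B + 1) := by
      rw [hcdef]; field_simp
    have hεp : (0:ℝ) < ε ^ (m+1+1) := pow_pos hε0 _
    have hE := (abs_le.mp hEB).1
    rw [hSsplit, hexpθ]
    nlinarith [mul_le_mul_of_nonneg_right
        (mul_le_mul_of_nonneg_left hlov0.le hB0) hεp.le,
      mul_pos hc0 hεp]
  have hcoefneg : Dp * r^(m+1+1) / ((m+1+1).factorial : ℝ) < 0 :=
    div_neg_of_neg_of_pos (mul_neg_of_neg_of_pos hDneg (pow_pos hr0 _)) hfac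
  have hFneg := mul_neg_of_neg_of_pos hcoefneg hSpos
  have hcontra := hFpos θ
  rw [hFeq] at hcontra
  linarith
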